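/- arXiv:1710.09962 — 4 statements merged into one kernel-verified Lean document; each statement's English description precedes it below -/
import Mathlib

section
/- Let M ∈ ℕ with M ≥ 1, let c_1, …, c_M be positive reals, and let a > 0. Consider the quantity Q(σ, ρ) = Σ_{i=1}^M c_i² σ_i² + Σ_{i≠j} ρ_{ij} c_i c_j σ_i σ_j over all nonnegative reals σ_1, …, σ_M with Σ_i σ_i² = a² and all reals ρ_{ij} ∈ [−1, 1] (for i ≠ j, with ρ_{ij} = ρ_{ji}). Then the maximum of Q equals a² · Σ_{j=1}^M c_j², and it is attained by taking ρ_{ij} = 1 for all i ≠ j and σ_i = c_i a / √(Σ_{j=1}^M c_j²) for each i. -/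
lemma offdiag_sum {M : ℕ} (f : Fin M → ℝ) :
    ∑ i, ∑ j ∈ Finset.univ.erase i, f i * f j
      = (∑ i, f i) ^ 2 - ∑ i, (f i) ^ 2 := by
  have h : ∀ i : Fin M, ∑ j ∈ Finset.univ.erase i, f i * f j
      = f i * (∑ j, f j) - f i ^ 2 := by
    intro i
    rw [← Finset.mul_sum, Finset.sum_erase_eq_sub (Finset.mem_univ i)]
    ring
  simp_rw [h, Finset.sum_sub_distrib, ← Finset.sum_mul]
  ring

/-- Theorem 1: the equivalent injected bias power
`Q(σ, ρ) = ∑ i, (c i)² (σ i)² + ∑_{i ≠ j} ρ i j * c i * c j * σ i * σ j`,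
maximized over nonnegative `σ` with `∑ i, (σ i)² = a²` and symmetric correlation
coefficients `ρ i j ∈ [-1, 1]`, equals `a² * ∑ j, (c j)²`, attained by taking all
`ρ i j = 1` and `σ i = c i * a / √(∑ j, (c j)²)`. -/
theorem stmt5 (M : ℕ) (hM : 1 ≤ M) (c : Fin M → ℝ) (hc : ∀ i, 0 < c i)
    (a : ℝ) (ha : 0 < a) :
    IsGreatest
        {q : ℝ | ∃ (σ : Fin M → ℝ) (ρ : Fin M → Fin M → ℝ),
          (∀ i, 0 ≤ σ i) ∧ (∑ i, (σ i) ^ 2 = a ^ 2) ∧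
          (∀ i j, i ≠ j → -1 ≤ ρ i j ∧ ρ i j ≤ 1) ∧
          (∀ i j, ρ i j = ρ j i) ∧
          q = ∑ i, (c i) ^ 2 * (σ i) ^ 2
              + ∑ i, ∑ j ∈ Finset.univ.erase i, ρ i j * (c i * c j * (σ i * σ j))}
        (a ^ 2 * ∑ j, (c j) ^ 2)
      ∧
    (∑ i, (c i) ^ 2 * (c i * a / Real.sqrt (∑ j, (c j) ^ 2)) ^ 2
        + ∑ i, ∑ j ∈ Finset.univ.erase i,
            (1 : ℝ) * (c i * c j * ((c i * a / Real.sqrt (∑ j', (c j') ^ 2))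
              * (c j * a / Real.sqrt (∑ j', (c j') ^ 2))))
      = a ^ 2 * ∑ j, (c j) ^ 2) := by
  have hne : Nonempty (Fin M) := Fin.pos_iff_nonempty.mp hM
  set S : ℝ := ∑ j, (c j) ^ 2 with hS
  have hSpos : 0 < S :=
    Finset.sum_pos (fun i _ => pow_pos (hc i) 2) Finset.univ_nonempty
  have hsqrt : Real.sqrt S * Real.sqrt S = S := Real.mul_self_sqrt hSpos.le
  have hsqrtpos : 0 < Real.sqrt S := Real.sqrt_pos.mpr hSpos
  -- the candidate σ
  set σ₀ : Fin M → ℝ := fun i => c i * a / Real.sqrt S with hσ₀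
  have hσ₀nonneg : ∀ i, 0 ≤ σ₀ i := fun i =>
    div_nonneg (mul_nonneg (hc i).le ha.le) hsqrtpos.le
  have hσ₀sum : ∑ i, (σ₀ i) ^ 2 = a ^ 2 := by
    have : ∀ i : Fin M, (σ₀ i) ^ 2 = (c i) ^ 2 * (a ^ 2 / S) := by
      intro i
      rw [hσ₀]
      simp only
      rw [div_pow, mul_pow, Real.sq_sqrt hSpos.le]
      ring
    simp_rw [this, ← Finset.sum_mul, ← hS]
    field_simp
  -- key equality: the attained value
  have hval : ∑ i, (c i) ^ 2 * (σ₀ i) ^ 2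
      + ∑ i, ∑ j ∈ Finset.univ.erase i, (1:ℝ) * (c i * c j * (σ₀ i * σ₀ j))
      = a ^ 2 * S := by
    have h1 : ∀ i : Fin M, (c i) ^ 2 * (σ₀ i) ^ 2 = (c i * σ₀ i) ^ 2 := by
      intro i; ring
    have h2 : ∀ i j : Fin M, (1:ℝ) * (c i * c j * (σ₀ i * σ₀ j))
        = (fun k => c k * σ₀ k) i * (fun k => c k * σ₀ k) j := by
      intro i j; simp; ring
    simp_rw [h1, h2]
    rw [offdiag_sum (fun k => c k * σ₀ k)]
    have hsum : ∑ i, c i * σ₀ i = a * Real.sqrt S := by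
      have : ∀ i : Fin M, c i * σ₀ i = (c i) ^ 2 * (a / Real.sqrt S) := by
        intro i; simp [hσ₀]; ring
      simp_rw [this, ← Finset.sum_mul, ← hS]
      field_simp
      rw [Real.sq_sqrt hSpos.le]
    have : (∑ i, (fun k => c k * σ₀ k) i) ^ 2 = a ^ 2 * S := by
      simp only
      rw [hsum]; rw [mul_pow, sq (Real.sqrt S), hsqrt]
    simp only at this ⊢
    rw [this]; ring
  refine ⟨⟨⟨σ₀, fun _ _ => 1, hσ₀nonneg, hσ₀sum,
      fun i j _ => ⟨by norm_num, le_refl 1⟩, fun i j => rfl, hval.symm⟩, ?_⟩, hval⟩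
  -- upper bound
  rintro q ⟨σ, ρ, hσnn, hσsum, hρbound, -, rfl⟩
  have step1 : ∑ i, (c i) ^ 2 * (σ i) ^ 2
      + ∑ i, ∑ j ∈ Finset.univ.erase i, ρ i j * (c i * c j * (σ i * σ j))
      ≤ (∑ i, c i * σ i) ^ 2 := by
    have hb : ∑ i, ∑ j ∈ Finset.univ.erase i, ρ i j * (c i * c j * (σ i * σ j))
        ≤ ∑ i, ∑ j ∈ Finset.univ.erase i, (c i * σ i) * (c j * σ j) := by
      apply Finset.sum_le_sum; intro i _
      apply Finset.sum_le_sum; intro j hj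
      have hij : i ≠ j := (Finset.ne_of_mem_erase hj).symm
      have hnn : 0 ≤ c i * c j * (σ i * σ j) :=
        mul_nonneg (mul_nonneg (hc i).le (hc j).le) (mul_nonneg (hσnn i) (hσnn j))
      calc ρ i j * (c i * c j * (σ i * σ j))
          ≤ 1 * (c i * c j * (σ i * σ j)) :=
            mul_le_mul_of_nonneg_right (hρbound i j hij).2 hnn
        _ = (c i * σ i) * (c j * σ j) := by ring
    have := offdiag_sum (fun k => c k * σ k)
    have h1 : ∑ i, (c i) ^ 2 * (σ i) ^ 2 = ∑ i, (c i * σ i) ^ 2 := by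
      apply Finset.sum_congr rfl; intro i _; ring
    rw [h1]
    calc ∑ i, (c i * σ i) ^ 2
        + ∑ i, ∑ j ∈ Finset.univ.erase i, ρ i j * (c i * c j * (σ i * σ j))
        ≤ ∑ i, (c i * σ i) ^ 2
          + ∑ i, ∑ j ∈ Finset.univ.erase i, (c i * σ i) * (c j * σ j) := by linarith
      _ = (∑ i, c i * σ i) ^ 2 := by rw [this]; ring
  have step2 : (∑ i, c i * σ i) ^ 2 ≤ S * a ^ 2 := by
    calc (∑ i, c i * σ i) ^ 2 ≤ (∑ i, (c i) ^ 2) * (∑ i, (σ i) ^ 2) :=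
          Finset.sum_mul_sq_le_sq_mul_sq Finset.univ c σ
      _ = S * a ^ 2 := by rw [← hS, hσsum]
  calc _ ≤ (∑ i, c i * σ i) ^ 2 := step1
    _ ≤ S * a ^ 2 := step2
    _ = a ^ 2 * S := by ring
end

section
/- Let T > 0, β_1 ≥ 0, β_2 ≥ 0, and α_1, α_2 ∈ ℝ with α_1 + α_2 > 0. Define A = √((β_2 − β_1 T²)²/4 + T²(α_1 + α_2)²), φ = arctan((β_2 − β_1 T²) / (2T(α_1 + α_2))), f(θ) = β_1 T² sin²θ + β_2 cos²θ + 2T(α_1 + α_2) sinθ cosθ, and θ* = π/4 − φ/2. Then θ* ∈ (0, π/2), and for every θ ∈ [0, π/2], f(θ) ≤ f(θ*) = (β_1 T² + β_2)/2 + A. -/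
open Real

/-- Theorem 2: with `f θ = β₁ T² sin²θ + β₂ cos²θ + 2T(α₁+α₂) sinθ cosθ`,
`A = √((β₂ − β₁T²)²/4 + T²(α₁+α₂)²)`, `φ = arctan((β₂ − β₁T²)/(2T(α₁+α₂)))`, and
`θ* = π/4 − φ/2`, we have `θ* ∈ (0, π/2)` and `f` attains its maximum
`(β₁T² + β₂)/2 + A` over `[0, π/2]` at `θ*`. -/
theorem stmt7 (T β₁ β₂ α₁ α₂ : ℝ) (hT : 0 < T) (hβ₁ : 0 ≤ β₁) (hβ₂ : 0 ≤ β₂)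
    (hα : 0 < α₁ + α₂)
    (A φ : ℝ) (f : ℝ → ℝ) (θs : ℝ)
    (hA : A = Real.sqrt ((β₂ - β₁ * T ^ 2) ^ 2 / 4 + T ^ 2 * (α₁ + α₂) ^ 2))
    (hφ : φ = Real.arctan ((β₂ - β₁ * T ^ 2) / (2 * T * (α₁ + α₂))))
    (hf : ∀ θ, f θ = β₁ * T ^ 2 * Real.sin θ ^ 2 + β₂ * Real.cos θ ^ 2
            + 2 * T * (α₁ + α₂) * Real.sin θ * Real.cos θ)
    (hθs : θs = Real.pi / 4 - φ / 2) :
    θs ∈ Set.Ioo 0 (Real.pi / 2) ∧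
      (∀ θ ∈ Set.Icc 0 (Real.pi / 2), f θ ≤ f θs) ∧
      f θs = (β₁ * T ^ 2 + β₂) / 2 + A := by
  set c : ℝ := (β₂ - β₁ * T ^ 2) / 2 with hc
  set s : ℝ := T * (α₁ + α₂) with hs
  have hs0 : 0 < s := mul_pos hT hα
  have hA' : A = Real.sqrt (c ^ 2 + s ^ 2) := by
    rw [hA]; congr 1; field_simp [hc, hs]; ring
  have hcs : 0 < c ^ 2 + s ^ 2 := by positivity
  have hA0 : 0 < A := by rw [hA']; exact Real.sqrt_pos.mpr hcs
  have hA2 : A ^ 2 = c ^ 2 + s ^ 2 := by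
    rw [hA']; exact Real.sq_sqrt hcs.le
  -- rewrite f in terms of double angles
  have hf2 : ∀ θ, f θ = (β₁ * T ^ 2 + β₂) / 2 + c * Real.cos (2 * θ) + s * Real.sin (2 * θ) := by
    intro θ
    rw [hf θ, Real.sin_two_mul, Real.cos_two_mul]
    have h1 : Real.sin θ ^ 2 = 1 - Real.cos θ ^ 2 := by
      have := Real.sin_sq_add_cos_sq θ; linarith
    rw [h1, hc, hs]; ring
  -- φ bounds
  have hφlt : φ < Real.pi / 2 := hφ ▸ Real.arctan_lt_pi_div_two _
  have hφgt : -(Real.pi / 2) < φ := hφ ▸ Real.neg_pi_div_two_lt_arctan _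
  -- the argument of arctan equals c / s
  have harg : (β₂ - β₁ * T ^ 2) / (2 * T * (α₁ + α₂)) = c / s := by
    rw [div_eq_div_iff (by positivity) hs0.ne', hc, hs]; ring
  have hsqrt : Real.sqrt (1 + (c / s) ^ 2) = Real.sqrt (c ^ 2 + s ^ 2) / s := by
    have h1 : 1 + (c / s) ^ 2 = (c ^ 2 + s ^ 2) / s ^ 2 := by field_simp; ring
    rw [h1, Real.sqrt_div (by positivity) (s ^ 2), Real.sqrt_sq hs0.le]
  have hcosφ : Real.cos φ = s / A := by
    rw [hφ, harg, Real.cos_arctan, hsqrt, hA']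
    rw [one_div, inv_div]
  have hsinφ : Real.sin φ = c / A := by
    rw [hφ, harg, Real.sin_arctan, hsqrt, hA']
    field_simp
  -- value at θs
  have h2θs : 2 * θs = Real.pi / 2 - φ := by rw [hθs]; ring
  have hval : c * (c / A) + s * (s / A) = A := by
    have h1 : c * (c / A) + s * (s / A) = (c ^ 2 + s ^ 2) / A := by ring
    rw [h1, ← hA2, sq, mul_div_assoc, div_self hA0.ne', mul_one]
  have hfθs : f θs = (β₁ * T ^ 2 + β₂) / 2 + A := by
    rw [hf2, h2θs, Real.cos_pi_div_two_sub, Real.sin_pi_div_two_sub, hsinφ, hcosφ]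
    linarith [hval]
  refine ⟨⟨by linarith, by linarith⟩, ?_, hfθs⟩
  intro θ hθ
  rw [hf2 θ, hfθs]
  have key : c * Real.cos (2 * θ) + s * Real.sin (2 * θ) ≤ A := by
    have hpyth := Real.sin_sq_add_cos_sq (2 * θ)
    nlinarith [sq_nonneg (c * Real.sin (2 * θ) - s * Real.cos (2 * θ)),
      sq_nonneg (A + (c * Real.cos (2 * θ) + s * Real.sin (2 * θ)))]
  linarith
end

section
/- Let n ∈ ℕ with n ≥ 1, let ξ_1, …, ξ_n be positive reals, and let a > 0. Then there exists a unique λ > 0 such that Σ_{i=1}^n max(1/λ − 1/ξ_i, 0) = a². -/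
/-- Existence and uniqueness of the water level `λ` in the water-filling solution:
for positive `ξ₁, …, ξₙ` and `a > 0`, there is a unique `λ > 0` with
`∑ i, max (1/λ - 1/ξ i) 0 = a²`. -/
theorem stmt11 (n : ℕ) (hn : 1 ≤ n) (ξ : Fin n → ℝ) (hξ : ∀ i, 0 < ξ i)
    (a : ℝ) (ha : 0 < a) :
    ∃! l : ℝ, 0 < l ∧ ∑ i, max (1 / l - 1 / ξ i) 0 = a ^ 2 := by
  set f : ℝ → ℝ := fun l => ∑ i, max (1 / l - 1 / ξ i) 0 with hf
  -- strict decrease where positive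
  have key : ∀ x y : ℝ, 0 < x → x < y → 0 < f y → f y < f x := by
    intro x y hx hxy hfy
    obtain ⟨j, hj⟩ : ∃ j, 0 < max (1 / y - 1 / ξ j) 0 := by
      by_contra h
      push_neg at h
      have : f y ≤ 0 := Finset.sum_nonpos (fun i _ => h i)
      linarith
    have hyx : 1 / y < 1 / x := one_div_lt_one_div_of_lt hx hxy
    apply Finset.sum_lt_sum
    · intro i _
      exact max_le_max (sub_le_sub_right hyx.le _) le_rfl
    · refine ⟨j, Finset.mem_univ j, ?_⟩
      have ht : 0 < 1 / y - 1 / ξ j := by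
        rcases lt_max_iff.mp hj with h | h
        · exact h
        · exact absurd h (lt_irrefl 0)
      calc max (1 / y - 1 / ξ j) 0 = 1 / y - 1 / ξ j := max_eq_left ht.le
        _ < 1 / x - 1 / ξ j := by linarith
        _ ≤ max (1 / x - 1 / ξ j) 0 := le_max_left _ _
  -- existence via IVT
  have hnpos : (0 : ℝ) < n := by exact_mod_cast hn
  set S : ℝ := ∑ i, 1 / ξ i with hS
  have hSpos : 0 ≤ S := Finset.sum_nonneg (fun i _ => one_div_nonneg.mpr (hξ i).le)
  have haS : 0 < a ^ 2 + S := by positivity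
  set l0 : ℝ := n / (a ^ 2 + S) with hl0def
  have hl0 : 0 < l0 := div_pos hnpos haS
  have hfl0 : a ^ 2 ≤ f l0 := by
    have h1 : ∑ i, (1 / l0 - 1 / ξ i) ≤ f l0 :=
      Finset.sum_le_sum (fun i _ => le_max_left _ _)
    have h2 : ∑ i : Fin n, (1 / l0 - 1 / ξ i) = n * (1 / l0) - S := by
      rw [Finset.sum_sub_distrib, Finset.sum_const, Finset.card_univ,
        Fintype.card_fin, nsmul_eq_mul]
    have h3 : 1 / l0 = (a ^ 2 + S) / n := by
      rw [hl0def, one_div_div]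
    have : n * (1 / l0) - S = a ^ 2 := by
      rw [h3]
      field_simp
      ring
    linarith [h1, h2.symm ▸ h1]
  obtain ⟨M, hM⟩ : ∃ M : ℝ, l0 ≤ M ∧ ∀ i, ξ i ≤ M := by
    obtain ⟨i0⟩ : Nonempty (Fin n) := ⟨⟨0, hn⟩⟩
    refine ⟨max l0 (Finset.univ.sup' ⟨i0, Finset.mem_univ i0⟩ ξ), le_max_left _ _,
      fun i => le_trans (Finset.le_sup' ξ (Finset.mem_univ i)) (le_max_right _ _)⟩
  have hMpos : 0 < M := lt_of_lt_of_le hl0 hM.1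
  have hfM : f M = 0 := by
    apply Finset.sum_eq_zero
    intro i _
    apply max_eq_right
    have : 1 / M ≤ 1 / ξ i := one_div_le_one_div_of_le (hξ i) (hM.2 i)
    linarith
  have hcont : ContinuousOn f (Set.Icc l0 M) := by
    apply continuousOn_finset_sum
    intro i _
    apply ContinuousOn.sup _ continuousOn_const
    apply ContinuousOn.sub _ continuousOn_const
    exact continuousOn_const.div continuousOn_id
      (fun x hx => ne_of_gt (lt_of_lt_of_le hl0 hx.1))
  have hmem : a ^ 2 ∈ Set.Icc (f M) (f l0) := by
    rw [hfM]
    exact ⟨by positivity, hfl0⟩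
  obtain ⟨l, hlmem, hleq⟩ := intermediate_value_Icc' hM.1 hcont hmem
  have hlpos : 0 < l := lt_of_lt_of_le hl0 hlmem.1
  refine ⟨l, ⟨hlpos, hleq⟩, ?_⟩
  rintro y ⟨hy, hyeq⟩
  have hyeq' : f y = a ^ 2 := hyeq
  by_contra hne
  rcases lt_or_gt_of_ne hne with h | h
  · have := key y l hy h (by rw [hleq]; positivity)
    rw [hleq, hyeq'] at this
    exact lt_irrefl _ this
  · have := key l y hlpos h (by rw [hyeq']; positivity)
    rw [hleq, hyeq'] at this
    exact lt_irrefl _ this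
end

section
/- Let n ∈ ℕ with n ≥ 1, let ξ_1, …, ξ_n be positive reals, let a > 0, and let λ > 0 satisfy Σ_{i=1}^n max(1/λ − 1/ξ_i, 0) = a². Set p_i = max(1/λ − 1/ξ_i, 0). Then for every choice of nonnegative reals q_1, …, q_n with Σ_{i=1}^n q_i ≤ a², we have Σ_{i=1}^n log(q_i ξ_i + 1) ≤ Σ_{i=1}^n log(p_i ξ_i + 1). -/
/-- Water-filling optimality: if `λ > 0` satisfies `∑ i, max (1/λ - 1/ξ i) 0 = a²`
and `p i = max (1/λ - 1/ξ i) 0`, then for every nonnegative allocation `q` with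
`∑ i, q i ≤ a²` we have `∑ i, log (q i * ξ i + 1) ≤ ∑ i, log (p i * ξ i + 1)`. -/
theorem stmt12 (n : ℕ) (hn : 1 ≤ n) (ξ : Fin n → ℝ) (hξ : ∀ i, 0 < ξ i)
    (a : ℝ) (ha : 0 < a) (l : ℝ) (hl : 0 < l)
    (hsum : ∑ i, max (1 / l - 1 / ξ i) 0 = a ^ 2)
    (p : Fin n → ℝ) (hp : ∀ i, p i = max (1 / l - 1 / ξ i) 0) :
    ∀ q : Fin n → ℝ, (∀ i, 0 ≤ q i) → (∑ i, q i ≤ a ^ 2) →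
      ∑ i, Real.log (q i * ξ i + 1) ≤ ∑ i, Real.log (p i * ξ i + 1) := by
  intro q hq hqsum
  have hp0 : ∀ i, 0 ≤ p i := fun i => by rw [hp i]; exact le_max_right _ _
  have hpsum : ∑ i, p i = a ^ 2 := by
    simpa [hp] using hsum
  -- per-index tangent bound
  have key : ∀ i, Real.log (q i * ξ i + 1) ≤ Real.log (p i * ξ i + 1) + l * (q i - p i) := by
    intro i
    have hxi := hξ i
    have hx : (0:ℝ) < q i * ξ i + 1 := by
      have := mul_nonneg (hq i) hxi.le; linarith
    have hy : (0:ℝ) < p i * ξ i + 1 := by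
      have := mul_nonneg (hp0 i) hxi.le; linarith
    have hlog : Real.log (q i * ξ i + 1) - Real.log (p i * ξ i + 1)
        ≤ (q i * ξ i + 1) / (p i * ξ i + 1) - 1 := by
      rw [← Real.log_div hx.ne' hy.ne']
      exact Real.log_le_sub_one_of_pos (div_pos hx hy)
    have hfrac : (q i * ξ i + 1) / (p i * ξ i + 1) - 1
        = (q i - p i) * ξ i / (p i * ξ i + 1) := by
      rw [div_sub_one hy.ne']
      ring
    rw [hfrac] at hlog
    have hbound : (q i - p i) * ξ i / (p i * ξ i + 1) ≤ l * (q i - p i) := by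
      rcases le_or_gt (1 / l - 1 / ξ i) 0 with hcase | hcase
      · -- p i = 0, and ξ i ≤ l
        have hpz : p i = 0 := by rw [hp i]; exact max_eq_right hcase
        have hxl : ξ i ≤ l := by
          have h1 : 1 / l ≤ 1 / ξ i := by linarith
          exact le_of_one_div_le_one_div hl h1
        rw [hpz]
        simp only [zero_mul, zero_add, div_one, sub_zero, mul_comm l (q i)]
        exact mul_le_mul_of_nonneg_left hxl (hq i)
      · -- p i = 1/l - 1/ξ i, and p i * ξ i + 1 = ξ i / l
        have hpv : p i = 1 / l - 1 / ξ i := by rw [hp i]; exact max_eq_left hcase.le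
        have hyv : p i * ξ i + 1 = ξ i / l := by
          rw [hpv]; field_simp; ring
        rw [hyv]
        have : (q i - p i) * ξ i / (ξ i / l) = l * (q i - p i) := by
          field_simp
        rw [this]
    linarith
  calc ∑ i, Real.log (q i * ξ i + 1)
      ≤ ∑ i, (Real.log (p i * ξ i + 1) + l * (q i - p i)) :=
        Finset.sum_le_sum fun i _ => key i
    _ = ∑ i, Real.log (p i * ξ i + 1) + l * (∑ i, q i - ∑ i, p i) := by
        rw [Finset.sum_add_distrib, ← Finset.sum_sub_distrib, ← Finset.mul_sum]
    _ ≤ ∑ i, Real.log (p i * ξ i + 1) := by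
        have : ∑ i, q i - ∑ i, p i ≤ 0 := by rw [hpsum]; linarith
        nlinarith
end
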